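/- Let (G,c) be an n-vertex edge-minimal edge-colored graph containing no rainbow triangle. Suppose z is a vertex and ζ a color maximizing |N_ζ(z)| = R over all vertex-color pairs, and suppose N_!(z) is nonempty, where N_!(z) is the set of neighbors u of z such that the color c({u,z}) appears on exactly one edge at z. Then there exists a vertex y₀ ∈ N(z) such that the number of distinct colors that y₀ sends into the closed neighborhood N[z] is at most R. -/
import Mathlib


open Finset

variable {V : Type*}

/-- Number of distinct colors on edges incident to `v`. -/
noncomputable def colorDeg (G : SimpleGraph V) (c : Sym2 V → ℕ) (v : V) : ℕ :=
  Set.ncard {α : ℕ | ∃ u, G.Adj u v ∧ c s(u, v) = α}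

/-- Number of distinct colors `c({u,v})` over `u ∈ N(v) ∩ U`. -/
noncomputable def colorDegOn (G : SimpleGraph V) (c : Sym2 V → ℕ) (v : V) (U : Set V) : ℕ :=
  Set.ncard {α : ℕ | ∃ u ∈ U, G.Adj u v ∧ c s(u, v) = α}

/-- Minimum color-degree `δ^c(G)`. -/
noncomputable def minColorDeg (G : SimpleGraph V) (c : Sym2 V → ℕ) : ℕ :=
  ⨅ v : V, colorDeg G c v

/-- `(G,c)` is edge-minimal: no proper spanning subgraph has the same minimum color-degree. -/
def EdgeMinimal (G : SimpleGraph V) (c : Sym2 V → ℕ) : Prop :=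
  ∀ H : SimpleGraph V, H ≤ G → H ≠ G → minColorDeg H c ≠ minColorDeg G c

/-- `(G,c)` contains a rainbow cycle on `ℓ` vertices. -/
def HasRainbowCycle (G : SimpleGraph V) (c : Sym2 V → ℕ) (ℓ : ℕ) : Prop :=
  ∃ (u : V) (p : G.Walk u u), p.IsCycle ∧ p.length = ℓ ∧ (p.edges.map c).Nodup

/-- There is a rainbow path from `v` to `y` on `k` vertices whose edge colors avoid `C`. -/
def RainbowPathAvoiding (G : SimpleGraph V) (c : Sym2 V → ℕ) (v y : V) (k : ℕ)
    (C : Set ℕ) : Prop :=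
  ∃ p : G.Walk v y, p.IsPath ∧ p.length + 1 = k ∧ (p.edges.map c).Nodup ∧
    ∀ e ∈ p.edges, c e ∉ C

/-- `σ_{v,X}(y)`: the number of colors `X`-separating `y` from `v`. -/
noncomputable def sepCount (G : SimpleGraph V) (c : Sym2 V → ℕ) (v : V) (X : Set V)
    (y : V) : ℕ :=
  Set.ncard {α : ℕ | ∃ x ∈ X, G.Adj x y ∧ c s(x, y) = α ∧ c s(v, x) ≠ α}

/-- `ρ_{v,X}(y)`: the number of colors restricted for `y` by `(v,X)`. -/
noncomputable def restrCount (G : SimpleGraph V) (c : Sym2 V → ℕ) (v : V) (X : Set V)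
    (y : V) : ℕ :=
  Set.ncard {α : ℕ | (∃ x ∈ X, G.Adj x y ∧ c s(x, y) = α ∧ c s(v, x) ≠ α) ∧
    ∀ w, G.Adj w y → w ∉ X → c s(w, y) ≠ α}

/-- The replication number `R(G,c) = max_{v,α} |N_α(v)|`. -/
noncomputable def repNum (G : SimpleGraph V) (c : Sym2 V → ℕ) : ℕ :=
  ⨆ v : V, ⨆ α : ℕ, Set.ncard {u : V | G.Adj u v ∧ c s(u, v) = α}

/-- `N_!(v)`: neighbors `u` of `v` whose color `c({u,v})` appears on exactly one edge at `v`. -/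
def bangNbhd (G : SimpleGraph V) (c : Sym2 V → ℕ) (v : V) : Set V :=
  {u : V | G.Adj u v ∧ Set.ncard {w : V | G.Adj w v ∧ c s(w, v) = c s(u, v)} = 1}


lemma bang_unique [Fintype V] (G : SimpleGraph V) (c : Sym2 V → ℕ)
    (hmin : EdgeMinimal G c) {u v y : V} (huv : G.Adj u v) (huy : G.Adj u y)
    (hyv : y ≠ v) (hc : c s(u, y) = c s(u, v)) :
    Set.ncard {w : V | G.Adj w v ∧ c s(w, v) = c s(u, v)} = 1 := by
  by_contra hne1
  have huS : u ∈ {w : V | G.Adj w v ∧ c s(w, v) = c s(u, v)} := ⟨huv, rfl⟩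
  have hex : ∃ w ∈ {w : V | G.Adj w v ∧ c s(w, v) = c s(u, v)}, w ≠ u := by
    by_contra h
    push_neg at h
    apply hne1
    have hsingle : {w : V | G.Adj w v ∧ c s(w, v) = c s(u, v)} = {u} :=
      Set.eq_singleton_iff_unique_mem.mpr ⟨huS, h⟩
    rw [hsingle, Set.ncard_singleton]
  obtain ⟨w, ⟨hwv, hwc⟩, hwu⟩ := hex
  set H := G.deleteEdges {s(u, v)} with hH
  have hadj : ∀ a b : V, H.Adj a b ↔ G.Adj a b ∧ s(a, b) ≠ s(u, v) := by
    intro a b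
    simp [hH, SimpleGraph.deleteEdges_adj]
  have hle : H ≤ G := by
    intro a b hab
    exact ((hadj a b).mp hab).1
  have hne : H ≠ G := by
    intro h
    have h2 : H.Adj u v := by rw [h]; exact huv
    exact ((hadj u v).mp h2).2 rfl
  apply hmin H hle hne
  have hcd : ∀ x : V, colorDeg H c x = colorDeg G c x := by
    intro x
    unfold colorDeg
    congr 1
    ext α
    simp only [Set.mem_setOf_eq]
    constructor
    · rintro ⟨a, ha, hca⟩
      exact ⟨a, ((hadj a x).mp ha).1, hca⟩
    · rintro ⟨a, ha, hca⟩
      by_cases he : s(a, x) = s(u, v)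
      · rcases Sym2.eq_iff.mp he with ⟨h1, h2⟩ | ⟨h1, h2⟩
        · rw [h1, h2] at hca
          rw [h2]
          refine ⟨w, (hadj w v).mpr ⟨hwv, ?_⟩, by rw [hwc, hca]⟩
          intro h'
          rcases Sym2.eq_iff.mp h' with ⟨e1, _⟩ | ⟨e1, _⟩
          · exact hwu e1
          · exact G.ne_of_adj hwv e1
        · rw [h1, h2] at hca
          rw [h2]
          refine ⟨y, (hadj y u).mpr ⟨huy.symm, ?_⟩, ?_⟩
          · intro h'
            rcases Sym2.eq_iff.mp h' with ⟨_, e2⟩ | ⟨e1, _⟩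
            · exact G.ne_of_adj huv e2
            · exact hyv e1
          · have e1 : (s(y, u) : Sym2 V) = s(u, y) := Sym2.eq_swap
            have e2 : (s(v, u) : Sym2 V) = s(u, v) := Sym2.eq_swap
            rw [e1, hc, ← hca, e2]
      · exact ⟨a, (hadj a x).mpr ⟨ha, he⟩, hca⟩
  unfold minColorDeg
  exact iInf_congr hcd

theorem stmt3 [Fintype V] (G : SimpleGraph V) (c : Sym2 V → ℕ)
    (hmin : EdgeMinimal G c)
    (hno : ¬ ∃ x y z : V, G.Adj x y ∧ G.Adj y z ∧ G.Adj x z ∧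
      c s(x, y) ≠ c s(y, z) ∧ c s(y, z) ≠ c s(x, z) ∧ c s(x, y) ≠ c s(x, z))
    (z : V) (ζ : ℕ) (R : ℕ)
    (hR : Set.ncard {u : V | G.Adj u z ∧ c s(u, z) = ζ} = R)
    (hmax : ∀ (v : V) (α : ℕ), Set.ncard {u : V | G.Adj u v ∧ c s(u, v) = α} ≤ R)
    (hbang : (bangNbhd G c z).Nonempty) :
    ∃ y₀ : V, G.Adj y₀ z ∧ colorDegOn G c y₀ (insert z (G.neighborSet z)) ≤ R := by
  classical
  by_contra hcon
  push_neg at hcon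
  set B : Finset V := Finset.univ.filter (fun y => y ∈ bangNbhd G c z) with hB
  obtain ⟨y₁, hy₁⟩ := hbang
  have hy₁B : y₁ ∈ B := by simp [hB, hy₁]
  set Inn : V → Finset V :=
    fun y => B.filter (fun u => G.Adj u y ∧ c s(u, y) = c s(u, z)) with hInn
  set Out : V → Finset V :=
    fun u => B.filter (fun y => G.Adj u y ∧ c s(u, y) = c s(u, z)) with hOut
  -- membership in B unfolds
  have hmemB : ∀ x : V, x ∈ B ↔ G.Adj x z ∧
      Set.ncard {w : V | G.Adj w z ∧ c s(w, z) = c s(x, z)} = 1 := by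
    intro x
    simp [hB, bangNbhd, Set.mem_setOf_eq]
  -- Claim 1 : in-degree at least R
  have claim1 : ∀ y ∈ B, R ≤ (Inn y).card := by
    intro y hyB
    have hyz : G.Adj y z := ((hmemB y).mp hyB).1
    have hyuni := ((hmemB y).mp hyB).2
    have hlt : R < colorDegOn G c y (insert z (G.neighborSet z)) := hcon y hyz
    set η := c s(y, z) with hη
    set I : Finset ℕ := (Inn y).image (fun u => c s(u, z)) with hI
    have hCsub : {α : ℕ | ∃ u ∈ insert z (G.neighborSet z), G.Adj u y ∧ c s(u, y) = α}
        ⊆ insert η (↑I : Set ℕ) := by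
      rintro α ⟨u, humem, huy, hcuy⟩
      by_cases hαη : α = η
      · exact Set.mem_insert_iff.mpr (Or.inl hαη)
      · have huz : G.Adj u z := by
          rcases Set.mem_insert_iff.mp humem with rfl | hmem
          · exfalso
            apply hαη
            rw [← hcuy, hη]
            exact congrArg c Sym2.eq_swap
          · exact (G.mem_neighborSet z u |>.mp hmem).symm
        have hcuz : c s(u, z) = α := by
          have hne_η : c s(u, z) ≠ η := by
            intro h
            obtain ⟨a, ha⟩ := Set.ncard_eq_one.mp hyuni
            have hu' : u ∈ {w : V | G.Adj w z ∧ c s(w, z) = c s(y, z)} := ⟨huz, h⟩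
            have hy' : y ∈ {w : V | G.Adj w z ∧ c s(w, z) = c s(y, z)} := ⟨hyz, rfl⟩
            rw [ha] at hu' hy'
            have : u = y := by
              rw [Set.mem_singleton_iff] at hu' hy'
              rw [hu', hy']
            exact G.ne_of_adj huy this
          by_contra hne'
          apply hno
          refine ⟨u, z, y, huz, hyz.symm, huy, ?_, ?_, ?_⟩
          · have e1 : (s(z, y) : Sym2 V) = s(y, z) := Sym2.eq_swap
            rw [e1]; exact hne_η
          · have e1 : (s(z, y) : Sym2 V) = s(y, z) := Sym2.eq_swap
            rw [e1, hcuy]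
            exact fun h => hαη h.symm
          · rw [hcuy]; exact hne'
        have huB : u ∈ B := by
          rw [hmemB]
          refine ⟨huz, ?_⟩
          exact bang_unique G c hmin huz huy (G.ne_of_adj hyz) (by rw [hcuy, hcuz])
        have huIn : u ∈ Inn y := by
          rw [hInn]
          simp only [Finset.mem_filter]
          exact ⟨huB, huy, by rw [hcuy, hcuz]⟩
        refine Set.mem_insert_iff.mpr (Or.inr ?_)
        rw [hI]
        simp only [Finset.coe_image, Set.mem_image, Finset.mem_coe]
        exact ⟨u, huIn, hcuz⟩
    have h1 : colorDegOn G c y (insert z (G.neighborSet z)) ≤ (Inn y).card + 1 := by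
      unfold colorDegOn
      calc Set.ncard {α : ℕ | ∃ u ∈ insert z (G.neighborSet z), G.Adj u y ∧ c s(u, y) = α}
          ≤ (insert η (↑I : Set ℕ)).ncard :=
            Set.ncard_le_ncard hCsub (Set.toFinite _)
        _ ≤ (↑I : Set ℕ).ncard + 1 := Set.ncard_insert_le _ _
        _ = I.card + 1 := by rw [Set.ncard_coe_finset]
        _ ≤ (Inn y).card + 1 := by
            rw [hI]
            exact Nat.add_le_add_right Finset.card_image_le 1
    omega
  -- Claim 2 : out-degree at most R - 1
  have claim2 : ∀ u ∈ B, (Out u).card + 1 ≤ R := by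
    intro u huB
    have huz : G.Adj u z := ((hmemB u).mp huB).1
    have hzOut : z ∉ Out u := by
      rw [hOut]
      simp only [Finset.mem_filter]
      rintro ⟨hzB, -⟩
      exact G.irrefl ((hmemB z).mp hzB).1
    have hsub : (↑(insert z (Out u)) : Set V) ⊆
        {w : V | G.Adj w u ∧ c s(w, u) = c s(u, z)} := by
      intro x hx
      simp only [Finset.coe_insert, Set.mem_insert_iff, Finset.mem_coe] at hx
      rcases hx with rfl | hx
      · exact ⟨huz.symm, congrArg c Sym2.eq_swap⟩
      · rw [hOut] at hx
        simp only [Finset.mem_filter] at hx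
        obtain ⟨-, hadj, hcol⟩ := hx
        refine ⟨hadj.symm, ?_⟩
        have e1 : (s(x, u) : Sym2 V) = s(u, x) := Sym2.eq_swap
        rw [e1, hcol]
    calc (Out u).card + 1 = (insert z (Out u)).card := by
          rw [Finset.card_insert_of_notMem hzOut]
      _ = (↑(insert z (Out u)) : Set V).ncard := by rw [Set.ncard_coe_finset]
      _ ≤ Set.ncard {w : V | G.Adj w u ∧ c s(w, u) = c s(u, z)} :=
          Set.ncard_le_ncard hsub (Set.toFinite _)
      _ ≤ R := hmax u (c s(u, z))
  -- double counting
  have hswap : ∑ y ∈ B, (Inn y).card = ∑ u ∈ B, (Out u).card := by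
    rw [hInn, hOut]
    simp only [Finset.card_filter]
    rw [Finset.sum_comm]
  have h1 : B.card * R ≤ ∑ y ∈ B, (Inn y).card := by
    calc B.card * R = ∑ _y ∈ B, R := by rw [Finset.sum_const, smul_eq_mul]
      _ ≤ ∑ y ∈ B, (Inn y).card := Finset.sum_le_sum claim1
  have h2 : (∑ u ∈ B, (Out u).card) + B.card ≤ B.card * R := by
    calc (∑ u ∈ B, (Out u).card) + B.card = ∑ u ∈ B, ((Out u).card + 1) := by
          rw [Finset.sum_add_distrib, Finset.sum_const, smul_eq_mul, mul_one]
      _ ≤ ∑ _u ∈ B, R := Finset.sum_le_sum claim2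
      _ = B.card * R := by rw [Finset.sum_const, smul_eq_mul]
    
  have hpos : 0 < B.card := Finset.card_pos.mpr ⟨y₁, hy₁B⟩
  rw [hswap] at h1
  omega
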